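/- arXiv:1802.03233 — 2 statements merged into one kernel-verified Lean document; each statement's English description precedes it below -/
import Mathlib

section
/- Let E be a t-module over K with exponential map exp_E that is a local isometry: there exists ε > 0 such that exp_E restricts to a norm-preserving bijection from the open ball of radius ε in Lie(E)(C_∞) to the open ball of radius ε in E(C_∞). Then applying exp_E coefficient-wise to power series gives a map from Lie(E){{t}} (power series whose coefficient norms tend to 0) to E{{t}} whose kernel is Λ[t], the polynomials with coefficients in the lattice Λ = ker(exp_E). In other words, the exact sequence 0 → Λ → Lie(E)(C_∞) → E(C_∞) induces an exact sequence 0 → Λ[t] → Lie(E){{t}} → E{{t}}. -/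
open Filter

/-- Let `E` be a `t`-module over `K ⊆ C_∞` of dimension `d`, with
`E(C_∞) ≅ Lie(E)(C_∞) ≅ C_∞^d` (sup-norm) and exponential map `expE` which is
`F_q`-linear (in particular additive) and a local isometry: there is `ε > 0` such
that `expE` restricts to a norm-preserving bijection between the `ε`-balls around `0`.
Let `Λ = ker(expE)` be the period lattice.

STATEMENT: applying `expE` coefficient-wise maps `Lie(E){{t}}` (power series whose
coefficient norms tend to `0`) into `E{{t}}`, and the kernel of this map is `Λ[t]`,
the polynomials with coefficients in `Λ`; i.e. the exponential sequence
`0 → Λ → Lie(E)(C_∞) → E(C_∞)` induces an exact sequence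
`0 → Λ[t] → Lie(E){{t}} → E{{t}}`. -/
theorem exp_coefficientwise_kernel
    {C : Type*} [NontriviallyNormedField C] [CompleteSpace C] (d : ℕ)
    (expE : (Fin d → C) → (Fin d → C))
    (hadd : ∀ x y, expE (x + y) = expE x + expE y)
    (ε : ℝ) (hε : 0 < ε)
    (hisom : ∀ x, ‖x‖ < ε → ‖expE x‖ = ‖x‖)
    (hsurj : ∀ y, ‖y‖ < ε → ∃ x, ‖x‖ < ε ∧ expE x = y) :
    (∀ a : ℕ → (Fin d → C),
      Tendsto (fun i => ‖a i‖) atTop (nhds 0) →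
        Tendsto (fun i => ‖expE (a i)‖) atTop (nhds 0)) ∧
    (∀ a : ℕ → (Fin d → C),
      Tendsto (fun i => ‖a i‖) atTop (nhds 0) →
        ((∀ i, expE (a i) = 0) ↔
          ((∀ i, expE (a i) = 0) ∧ ∃ n : ℕ, ∀ i ≥ n, a i = 0))) := by
  constructor
  · intro a ha
    apply ha.congr'
    have hev : ∀ᶠ i in atTop, ‖a i‖ < ε := ha.eventually (eventually_lt_nhds hε)
    filter_upwards [hev] with i hi
    exact (hisom _ hi).symm
  · intro a ha
    refine ⟨fun h => ⟨h, ?_⟩, fun h => h.1⟩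
    have hev : ∀ᶠ i in atTop, ‖a i‖ < ε := ha.eventually (eventually_lt_nhds hε)
    obtain ⟨n, hn⟩ := hev.exists_forall_of_atTop
    refine ⟨n, fun i hi => ?_⟩
    have : ‖a i‖ = 0 := by rw [← hisom _ (hn i hi), h i, norm_zero]
    exact norm_eq_zero.mp this
end

section
/- Let E be a t-module over C_∞ of dimension d, with exponential map exp_E a local isometry, and let dφ_t = θ + N with N nilpotent on Lie(E)(C_∞) ≅ C_∞^d and |θ| > 1. Then the map δ: Λ → H sending a period λ to Σ_{i≥0} exp_E(dφ_t^{-i-1}(λ)) t^i is a well-defined isomorphism of F_q[t]-modules from the period lattice Λ = ker(exp_E) to H = {Σ e_i t^i ∈ E{{t}} : φ_t(e_i) applied coefficient-wise equals the shift, i.e. φ_t(h) = h·t}. -/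
open Filter Finset


section Aux

variable {C : Type*} [NontriviallyNormedField C] [CompleteSpace C] [IsUltrametricDist C]

instance pi_ultra {ι : Type*} [Fintype ι] {X : ι → Type*} [∀ i, PseudoMetricSpace (X i)]
    [∀ i, IsUltrametricDist (X i)] : IsUltrametricDist (∀ i, X i) :=
  ⟨fun x y z => by
    rw [dist_pi_le_iff (le_trans dist_nonneg (le_max_left _ _))]
    intro i
    exact le_trans (IsUltrametricDist.dist_triangle_max _ _ _)
      (max_le_max (dist_le_pi_dist x y i) (dist_le_pi_dist y z i))⟩

lemma equiv_pow_apply {M : Type*} [AddCommGroup M] [Module C M] (e : M ≃ₗ[C] M)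
    (n : ℕ) (x : M) : (e ^ n) x = ((e : M →ₗ[C] M) ^ n) x := by
  induction n with
  | zero => rfl
  | succ n ih =>
    rw [pow_succ', pow_succ', Module.End.mul_apply]
    have : (e * e ^ n) x = e ((e ^ n) x) := rfl
    rw [this, ih]; rfl

lemma tendsto_symm_pow (d : ℕ) (A : (Fin d → C) ≃ₗ[C] (Fin d → C)) (θ : C) (hθ : 1 < ‖θ‖)
    (hN : ((A : (Fin d → C) →ₗ[C] (Fin d → C)) -
        θ • (LinearMap.id : (Fin d → C) →ₗ[C] (Fin d → C))) ^ d = 0) (x : Fin d → C) :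
    Tendsto (fun m : ℕ => ‖(A.symm ^ m) x‖) atTop (nhds 0) := by
  set Am : Module.End C (Fin d → C) := (A : (Fin d → C) →ₗ[C] (Fin d → C)) with hAm
  set S : Module.End C (Fin d → C) := (A.symm : (Fin d → C) →ₗ[C] (Fin d → C)) with hS
  have hθ0 : θ ≠ 0 := by
    intro h; rw [h, norm_zero] at hθ; linarith
  have hAS : Am * S = 1 := by
    ext y; simp [Am, S, Module.End.mul_apply]
  have hSA : S * Am = 1 := by
    ext y; simp [Am, S, Module.End.mul_apply]
  set Nl : Module.End C (Fin d → C) := Am - θ • 1 with hNl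
  have hNd : Nl ^ d = 0 := by
    have : Nl = (A : (Fin d → C) →ₗ[C] (Fin d → C)) -
        θ • (LinearMap.id : (Fin d → C) →ₗ[C] (Fin d → C)) := rfl
    rw [this]; exact hN
  set T : Module.End C (Fin d → C) := θ • S with hT
  set M₀ : Module.End C (Fin d → C) := T - 1 with hM₀
  have h1 : Nl * S = Am * S - θ • S := by rw [hNl, sub_mul, smul_mul_assoc, one_mul]
  have h2 : S * Nl = S * Am - θ • S := by rw [hNl, mul_sub, mul_smul_comm, mul_one]
  have hM₀eq : M₀ = -(Nl * S) := by
    rw [hM₀, hT, h1, hAS, neg_sub]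
  have hM₀eq' : M₀ = (-1 : C) • (Nl * S) := by
    rw [hM₀eq, ← neg_one_smul C (Nl * S)]
  have hcomm : Commute Nl S := by
    rw [Commute, SemiconjBy, h1, h2, hAS, hSA]
  have hM₀d : M₀ ^ d = 0 := by
    have hns : (Nl * S) ^ d = 0 := by rw [hcomm.mul_pow, hNd, zero_mul]
    rw [hM₀eq', smul_pow, hcomm.mul_pow, hNd, zero_mul, smul_zero]
  -- expansion of T ^ m
  have hbound : ∀ (m : ℕ) (y : Fin d → C),
      ‖(T ^ m) y‖ ≤ ∑ k ∈ Finset.range d, ‖(M₀ ^ k) y‖ := by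
    intro m y
    have hc : 0 ≤ ∑ k ∈ Finset.range d, ‖(M₀ ^ k) y‖ :=
      Finset.sum_nonneg fun _ _ => norm_nonneg _
    have hTm : T = M₀ + 1 := by rw [hM₀]; abel
    have hexp : T ^ m = ∑ k ∈ Finset.range (m + 1), M₀ ^ k * (m.choose k : Module.End C (Fin d → C)) := by
      rw [hTm, (Commute.one_right M₀).add_pow]
      congr 1; ext k; rw [one_pow, mul_one]
    have happ : (T ^ m) y = ∑ k ∈ Finset.range (m + 1), (m.choose k) • ((M₀ ^ k) y) := by
      rw [hexp]
      rw [LinearMap.coe_sum, Finset.sum_apply]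
      congr 1; ext k
      rw [Module.End.mul_apply, Module.End.natCast_apply, map_nsmul]
    rw [happ]
    refine IsUltrametricDist.norm_sum_le_of_forall_le_of_nonneg hc ?_
    intro k hk
    by_cases hkd : k < d
    · calc ‖(m.choose k) • ((M₀ ^ k) y)‖ ≤ ‖(M₀ ^ k) y‖ :=
            IsUltrametricDist.norm_nsmul_le _ _
        _ ≤ ∑ j ∈ Finset.range d, ‖(M₀ ^ j) y‖ :=
            Finset.single_le_sum (f := fun j => ‖(M₀ ^ j) y‖)
              (fun _ _ => norm_nonneg _) (Finset.mem_range.mpr hkd)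
    · push_neg at hkd
      have : M₀ ^ k = 0 := by
        have : M₀ ^ k = M₀ ^ d * M₀ ^ (k - d) := by rw [← pow_add, Nat.add_sub_cancel' hkd]
        rw [this, hM₀d, zero_mul]
      simp [this, hc]
  -- S ^ m in terms of T ^ m
  have hSm : ∀ m : ℕ, S ^ m = (θ⁻¹) ^ m • T ^ m := by
    intro m
    rw [hT, smul_pow, smul_smul, ← mul_pow, inv_mul_cancel₀ hθ0, one_pow, one_smul]
  set c : ℝ := ∑ k ∈ Finset.range d, ‖(M₀ ^ k) x‖ with hc
  have hcnn : 0 ≤ c := Finset.sum_nonneg fun _ _ => norm_nonneg _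
  have hnorm : ∀ m : ℕ, ‖(A.symm ^ m) x‖ ≤ c * (‖θ‖⁻¹) ^ m := by
    intro m
    have h1 : (A.symm ^ m) x = (S ^ m) x := equiv_pow_apply A.symm m x
    rw [h1, hSm m]
    have : ((θ⁻¹ ^ m) • T ^ m) x = (θ⁻¹ ^ m) • ((T ^ m) x) := rfl
    rw [this, norm_smul, norm_pow, norm_inv]
    rw [mul_comm]
    exact mul_le_mul_of_nonneg_right (hbound m x) (by positivity)
  have hr : ‖θ‖⁻¹ < 1 := by
    rw [inv_lt_one_iff₀]; right; exact hθ
  have hr0 : 0 ≤ ‖θ‖⁻¹ := by positivity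
  have htend : Tendsto (fun m : ℕ => c * (‖θ‖⁻¹) ^ m) atTop (nhds 0) := by
    have := tendsto_pow_atTop_nhds_zero_of_lt_one hr0 hr
    simpa using this.const_mul c
  exact squeeze_zero (fun m => norm_nonneg _) hnorm htend

end Aux

/-- Let `C = C_∞` be a complete nonarchimedean valued field, `E` a `t`-module of
dimension `d` over `C` with `E(C_∞) ≅ Lie(E)(C_∞) ≅ C^d` (sup-norm).  Let
`A = dφ_t` (an invertible linear map, `A = θ + N` with `N` nilpotent, `N^d = 0`,
`|θ| > 1`), `φt = φ_t` the `t`-action on `E(C_∞)` (additive), and `expE` the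
exponential: additive, satisfying `expE ∘ dφ_t = φ_t ∘ expE`, and a local isometry.
Let `Λ = ker(expE)` and
`H = {Σ e_i t^i ∈ E{{t}} : φ_t(h) = h·t}` (coefficient norms tending to `0`,
coefficient-wise `φ_t`-action equal to the shift).

STATEMENT: `δ : λ ↦ Σ_{i≥0} expE(dφ_t^{-i-1}(λ)) t^i` is a well-defined
isomorphism of `F_q[t]`-modules `Λ → H`: it maps `Λ` into `H`, is additive,
intertwines the `t`-action `dφ_t` on `Λ` with the `t`-action `φ_t` on `H`,
and is a bijection from `Λ` onto `H`. -/
theorem delta_iso_lattice_to_H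
    {C : Type*} [NontriviallyNormedField C] [CompleteSpace C] [IsUltrametricDist C]
    (d : ℕ) (A : (Fin d → C) ≃ₗ[C] (Fin d → C)) (θ : C) (hθ : 1 < ‖θ‖)
    (hN : ((A : (Fin d → C) →ₗ[C] (Fin d → C)) -
        θ • (LinearMap.id : (Fin d → C) →ₗ[C] (Fin d → C))) ^ d = 0)
    (φt : (Fin d → C) → (Fin d → C)) (hφadd : ∀ x y, φt (x + y) = φt x + φt y)
    (expE : (Fin d → C) → (Fin d → C))
    (hadd : ∀ x y, expE (x + y) = expE x + expE y)
    (hcomm : ∀ x, expE (A x) = φt (expE x))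
    (ε : ℝ) (hε : 0 < ε)
    (hisom : ∀ x, ‖x‖ < ε → ‖expE x‖ = ‖x‖)
    (hsurj : ∀ y, ‖y‖ < ε → ∃ x, ‖x‖ < ε ∧ expE x = y) :
    (∀ lam ∈ {x | expE x = 0}, (fun i : ℕ => expE ((A.symm ^ (i + 1)) lam)) ∈
        {h : ℕ → (Fin d → C) |
          Tendsto (fun i => ‖h i‖) atTop (nhds 0) ∧
          ∀ n : ℕ, φt (h n) = if n = 0 then 0 else h (n - 1)}) ∧
    (∀ lam ∈ {x | expE x = 0}, ∀ mu ∈ {x | expE x = 0}, ∀ i : ℕ,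
      expE ((A.symm ^ (i + 1)) (lam + mu)) =
        expE ((A.symm ^ (i + 1)) lam) + expE ((A.symm ^ (i + 1)) mu)) ∧
    (∀ lam ∈ {x | expE x = 0}, ∀ i : ℕ,
      expE ((A.symm ^ (i + 1)) (A lam)) = φt (expE ((A.symm ^ (i + 1)) lam))) ∧
    Set.BijOn (fun lam => fun i : ℕ => expE ((A.symm ^ (i + 1)) lam))
      {x | expE x = 0}
      {h : ℕ → (Fin d → C) |
        Tendsto (fun i => ‖h i‖) atTop (nhds 0) ∧
        ∀ n : ℕ, φt (h n) = if n = 0 then 0 else h (n - 1)} := by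
  -- basic additive facts
  have h0 : expE 0 = 0 := by
    have h := hadd 0 0
    rw [add_zero] at h
    exact (left_eq_add.mp h)
  have hneg : ∀ x, expE (-x) = - expE x := by
    intro x
    have h := hadd x (-x)
    rw [add_neg_cancel, h0] at h
    have h' : expE (-x) + expE x = 0 := by rw [add_comm]; exact h.symm
    exact eq_neg_of_add_eq_zero_left h'
  have hsub : ∀ x y, expE (x - y) = expE x - expE y := by
    intro x y
    rw [sub_eq_add_neg, hadd, hneg, sub_eq_add_neg]
  -- powers of A.symm
  have hAsucc : ∀ (n : ℕ) (x : Fin d → C), (A.symm ^ (n + 1)) x = A.symm ((A.symm ^ n) x) := by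
    intro n x; rw [pow_succ']; rfl
  have hAsucc' : ∀ (n : ℕ) (x : Fin d → C), (A.symm ^ (n + 1)) x = (A.symm ^ n) (A.symm x) := by
    intro n x; rw [pow_succ]; rfl
  have hpow0 : ∀ x : Fin d → C, (A.symm ^ (0 : ℕ)) x = x := by
    intro x; rw [pow_zero]; rfl
  have hAdown : ∀ (n : ℕ) (x : Fin d → C), A ((A.symm ^ (n + 1)) x) = (A.symm ^ n) x := by
    intro n x; rw [hAsucc]; exact A.apply_symm_apply _
  have tendS : ∀ x : Fin d → C,
      Tendsto (fun m : ℕ => ‖(A.symm ^ m) x‖) atTop (nhds 0) :=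
    tendsto_symm_pow d A θ hθ hN
  -- injectivity of expE on the ε-ball
  have einj : ∀ u v : Fin d → C, ‖u‖ < ε → ‖v‖ < ε → expE u = expE v → u = v := by
    intro u v hu hv huv
    have h1 : ‖u - v‖ < ε := by
      calc ‖u - v‖ = ‖u + (-v)‖ := by rw [sub_eq_add_neg]
        _ ≤ max ‖u‖ ‖-v‖ := IsUltrametricDist.norm_add_le_max u (-v)
        _ < ε := by rw [norm_neg]; exact max_lt hu hv
    have h2 : expE (u - v) = 0 := by rw [hsub, huv, sub_self]
    have h3 : ‖u - v‖ = 0 := by rw [← hisom _ h1, h2, norm_zero]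
    have := norm_eq_zero.mp h3
    exact sub_eq_zero.mp this
  -- goal 1 : maps into H
  have goal1 : ∀ lam ∈ {x | expE x = 0}, (fun i : ℕ => expE ((A.symm ^ (i + 1)) lam)) ∈
      {h : ℕ → (Fin d → C) |
        Tendsto (fun i => ‖h i‖) atTop (nhds 0) ∧
        ∀ n : ℕ, φt (h n) = if n = 0 then 0 else h (n - 1)} := by
    intro lam hlam
    have hlam' : expE lam = 0 := hlam
    constructor
    · have htend : Tendsto (fun i : ℕ => ‖(A.symm ^ (i + 1)) lam‖) atTop (nhds 0) :=
        (tendS lam).comp (tendsto_add_atTop_nat 1)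
      have hev : ∀ᶠ i in atTop, ‖expE ((A.symm ^ (i + 1)) lam)‖ ≤ ‖(A.symm ^ (i + 1)) lam‖ := by
        filter_upwards [htend.eventually_lt_const hε] with i hi
        rw [hisom _ hi]
      exact squeeze_zero' (Eventually.of_forall fun i => norm_nonneg _) hev htend
    · intro n
      have hstep : φt (expE ((A.symm ^ (n + 1)) lam)) = expE ((A.symm ^ n) lam) := by
        rw [← hcomm, hAdown]
      cases n with
      | zero =>
        rw [hstep, hpow0, hlam']
        simp
      | succ k =>
        simp only [Nat.succ_ne_zero, if_neg, Nat.add_sub_cancel]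
        exact hstep
  refine ⟨goal1, ?_, ?_, fun lam hlam => goal1 lam hlam, ?_, ?_⟩
  · -- additivity
    intro lam _ mu _ i
    rw [map_add ((A.symm ^ (i + 1))), hadd]
  · -- intertwining
    intro lam _ i
    have l : (A.symm ^ (i + 1)) (A lam) = (A.symm ^ i) lam := by
      rw [hAsucc', A.symm_apply_apply]
    rw [l, ← hcomm, hAdown]
  · -- injectivity
    intro lam hlam mu hmu heq
    have hlam' : expE lam = 0 := hlam
    have hmu' : expE mu = 0 := hmu
    have heq' : ∀ i : ℕ, expE ((A.symm ^ (i + 1)) lam) = expE ((A.symm ^ (i + 1)) mu) :=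
      fun i => congrFun heq i
    set ν := lam - mu with hν
    have hzero : ∀ m : ℕ, expE ((A.symm ^ m) ν) = 0 := by
      intro m
      cases m with
      | zero => rw [hpow0, hν, hsub, hlam', hmu', sub_self]
      | succ k =>
        rw [hν, map_sub, hsub, heq' k, sub_self]
    obtain ⟨m, hm⟩ := ((tendS ν).eventually_lt_const hε).exists
    have h1 : ‖(A.symm ^ m) ν‖ = 0 := by
      rw [← hisom _ hm, hzero m, norm_zero]
    have h2 : (A.symm ^ m) ν = 0 := norm_eq_zero.mp h1
    have h3 : ν = 0 := by
      have := (A.symm ^ m).injective (a₁ := ν) (a₂ := 0) (by rw [h2, map_zero])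
      exact this
    exact sub_eq_zero.mp h3
  · -- surjectivity
    intro h hh
    obtain ⟨hh1, hh2⟩ := hh
    -- bound for A
    set Ac : (Fin d → C) →L[C] (Fin d → C) :=
      LinearMap.toContinuousLinearMap (A : (Fin d → C) →ₗ[C] (Fin d → C)) with hAc
    set cA : ℝ := ‖Ac‖ + 1 with hcA
    have hcA1 : (1 : ℝ) ≤ cA := by
      have := norm_nonneg Ac
      rw [hcA]; linarith
    have hcA0 : (0 : ℝ) < cA := lt_of_lt_of_le one_pos hcA1
    have hAle : ∀ x : Fin d → C, ‖A x‖ ≤ cA * ‖x‖ := by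
      intro x
      have h1 : ‖Ac x‖ ≤ ‖Ac‖ * ‖x‖ := Ac.le_opNorm x
      have h2 : (Ac : (Fin d → C) → (Fin d → C)) x = A x := by
        simp [hAc, LinearMap.coe_toContinuousLinearMap']
      rw [← h2]
      refine le_trans h1 ?_
      have := norm_nonneg x
      nlinarith [norm_nonneg Ac]
    set ε' : ℝ := ε / cA with hε'
    have hε'0 : 0 < ε' := div_pos hε hcA0
    have hε'ε : ε' ≤ ε := by
      rw [hε', div_le_iff₀ hcA0]
      nlinarith
    have hcAε' : cA * ε' = ε := by
      rw [hε', mul_div_cancel₀ _ (ne_of_gt hcA0)]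
    obtain ⟨i, hi⟩ := Filter.eventually_atTop.mp (hh1.eventually_lt_const hε'0)
    -- choose lifts
    have hx0 : ∀ j : ℕ, ∃ x : Fin d → C, ‖h j‖ < ε' → (‖x‖ < ε ∧ expE x = h j) := by
      intro j
      by_cases hj : ‖h j‖ < ε'
      · obtain ⟨x, hx1, hx2⟩ := hsurj (h j) (lt_of_lt_of_le hj hε'ε)
        exact ⟨x, fun _ => ⟨hx1, hx2⟩⟩
      · exact ⟨0, fun hc => absurd hc hj⟩
    choose x hxspec using hx0
    have hxlt : ∀ j ≥ i, ‖x j‖ < ε := fun j hj => (hxspec j (hi j hj)).1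
    have hxe : ∀ j ≥ i, expE (x j) = h j := fun j hj => (hxspec j (hi j hj)).2
    have hxnorm : ∀ j ≥ i, ‖x j‖ < ε' := by
      intro j hj
      rw [← hisom _ (hxlt j hj), hxe j hj]
      exact hi j hj
    -- compatibility
    have key : ∀ j ≥ i, A (x (j + 1)) = x j := by
      intro j hj
      have hAxlt : ‖A (x (j + 1))‖ < ε := by
        calc ‖A (x (j + 1))‖ ≤ cA * ‖x (j + 1)‖ := hAle _
          _ < cA * ε' := by
              exact (mul_lt_mul_iff_right₀ hcA0).mpr (hxnorm (j + 1) (le_trans hj (Nat.le_succ j)))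
          _ = ε := hcAε'
      refine einj _ _ hAxlt (hxlt j hj) ?_
      rw [hcomm, hxe (j + 1) (le_trans hj (Nat.le_succ j)), hxe j hj]
      have := hh2 (j + 1)
      simpa using this
    set lam : Fin d → C := (A.symm ^ (i + 1)).symm (x i) with hlamdef
    have hbase : (A.symm ^ (i + 1)) lam = x i := by
      rw [hlamdef]; exact LinearEquiv.apply_symm_apply _ _
    have hup : ∀ m : ℕ, (A.symm ^ (i + 1 + m)) lam = x (i + m) := by
      intro m
      induction m with
      | zero => simpa using hbase
      | succ m ih =>
        have e1 : i + 1 + (m + 1) = (i + 1 + m) + 1 := by ring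
        rw [e1, hAsucc, ih]
        have hk := key (i + m) (Nat.le_add_right i m)
        have : x (i + m + 1) = A.symm (x (i + m)) := by
          rw [← hk, A.symm_apply_apply]
        rw [← this]
        have e2 : i + (m + 1) = i + m + 1 := by omega
        rw [e2]
    set P : ℕ → Prop := fun j => expE ((A.symm ^ j) lam) = if j = 0 then 0 else h (j - 1)
      with hP
    have hPbig : ∀ m : ℕ, P (i + 1 + m) := by
      intro m
      show expE ((A.symm ^ (i + 1 + m)) lam) = if i + 1 + m = 0 then 0 else h (i + 1 + m - 1)
      rw [hup m, hxe (i + m) (Nat.le_add_right i m)]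
      have h1 : i + 1 + m ≠ 0 := by omega
      have h2 : i + 1 + m - 1 = i + m := by omega
      rw [if_neg h1, h2]
    have hPstep : ∀ j : ℕ, P (j + 1) → P j := by
      intro j hPj
      have hPj' : expE ((A.symm ^ (j + 1)) lam) =
          if j + 1 = 0 then 0 else h (j + 1 - 1) := hPj
      show expE ((A.symm ^ j) lam) = if j = 0 then 0 else h (j - 1)
      have h1 : expE ((A.symm ^ j) lam) = φt (expE ((A.symm ^ (j + 1)) lam)) := by
        rw [← hcomm, hAdown]
      rw [h1, hPj', if_neg (Nat.succ_ne_zero j), Nat.add_sub_cancel]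
      exact hh2 j
    have hPall : ∀ j : ℕ, P j := by
      have hdown : ∀ k : ℕ, P (i + 1 - k) := by
        intro k
        induction k with
        | zero => simpa using hPbig 0
        | succ k ih =>
          by_cases hk : i + 1 - k = 0
          · have : i + 1 - (k + 1) = i + 1 - k := by omega
            rw [this]; exact ih
          · have : i + 1 - k = (i + 1 - (k + 1)) + 1 := by omega
            rw [this] at ih
            exact hPstep _ ih
      intro j
      rcases le_or_gt j (i + 1) with hj | hj
      · have : j = i + 1 - (i + 1 - j) := by omega
        rw [this]; exact hdown _
      · have : j = i + 1 + (j - (i + 1)) := by omega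
        rw [this]; exact hPbig _
    refine ⟨lam, ?_, ?_⟩
    · have h00 : expE ((A.symm ^ (0 : ℕ)) lam) = if (0 : ℕ) = 0 then 0 else h (0 - 1) :=
        hPall 0
      rw [hpow0, if_pos rfl] at h00
      exact h00
    · funext j
      have hj : expE ((A.symm ^ (j + 1)) lam) =
          if j + 1 = 0 then 0 else h (j + 1 - 1) := hPall (j + 1)
      rw [if_neg (Nat.succ_ne_zero j), Nat.add_sub_cancel] at hj
      exact hj
end
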